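/- Let n ≥ 1 and let η₁, …, ηₙ be real numbers. Let N(η) be the real n×n matrix with entries N₁₁ = η₁², N_{ii} = (ηᵢ − 1)² for 2 ≤ i ≤ n, and N_{ij} = ηᵢηⱼ for i ≠ j. Then det N(η) = η₁² Π_{j=2}^n (1 − 2ηⱼ). -/

import Mathlib

open Finset

/-- The determinant of the matrix whose `(1,1)` entry is `η₁²`, whose other
diagonal entries are `(ηᵢ − 1)²`, and whose off-diagonal entries are `ηᵢηⱼ`, equals
`η₁² ∏_{j=2}^n (1 − 2ηⱼ)`. -/
theorem det_eta_matrix_first_row (n : ℕ) (hn : 0 < n) (η : Fin n → ℝ) :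
    (Matrix.of fun i j =>
        if i = j then (if i = (⟨0, hn⟩ : Fin n) then (η i) ^ 2 else (η i - 1) ^ 2)
        else η i * η j).det
      = (η ⟨0, hn⟩) ^ 2 * ∏ j ∈ Finset.univ.erase (⟨0, hn⟩ : Fin n), (1 - 2 * η j) := by
  set z : Fin n := ⟨0, hn⟩ with hz
  by_cases h0 : η z = 0
  · rw [Matrix.det_eq_zero_of_row_eq_zero z, h0]
    · ring
    · intro j
      rcases eq_or_ne z j with hj | hj
      · subst hj; simp [h0]
      · simp [hj, h0]
  · -- B : row z is η z • η, row i (i ≠ z) is (1 - 2 η i) • e_i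
    set B : Matrix (Fin n) (Fin n) ℝ := Matrix.of fun i j =>
      if i = z then η z * η j else (if i = j then 1 - 2 * η i else 0) with hB
    have hAB : (Matrix.of fun i j =>
        if i = j then (if i = z then (η i) ^ 2 else (η i - 1) ^ 2)
        else η i * η j).det = B.det := by
      apply Matrix.det_eq_of_forall_row_eq_smul_add_const
        (fun i => if i = z then 0 else η i / η z) z (by simp)
      intro i j
      by_cases hiz : i = z
      · rcases eq_or_ne i j with hij | hij
        · subst hij
          simp [hB, hiz]; ring
        · simp [hB, hiz, hij]
          intro h; exact absurd (hiz.trans h) hij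
      · by_cases hij : i = j
        · subst hij
          by_cases hjz : i = z
          · exact absurd hjz hiz
          · simp only [Matrix.of_apply, if_pos rfl, if_neg hiz, hB]
            field_simp
            simp only [if_pos trivial]
            ring
        · simp only [Matrix.of_apply, if_neg hij, if_neg hiz, hB]
          by_cases hjz : j = z
          · subst hjz; field_simp; simp only [if_pos trivial]; ring
          · field_simp; simp only [if_pos trivial]; ring
    rw [hAB]
    have htri : B.BlockTriangular id := by
      intro i j hij
      have hiz : i ≠ z := by
        intro h; rw [h] at hij; exact absurd hij (by simp [hz, Fin.le_def, id])
      have hij' : i ≠ j := fun h => by simp [h, id] at hij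
      simp [hB, hiz, hij']
    rw [Matrix.det_of_upperTriangular htri]
    rw [← Finset.prod_erase_mul _ _ (Finset.mem_univ z)]
    have : B z z = (η z) ^ 2 := by simp [hB]; ring
    rw [this, mul_comm]
    congr 1
    apply Finset.prod_congr rfl
    intro i hi
    have hiz : i ≠ z := (Finset.mem_erase.mp hi).1
    simp [hB, hiz]
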